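/- arXiv:1312.5299 — 2 statements merged into one kernel-verified Lean document; each statement's English description precedes it below -/
import Mathlib

section
/- Let U be a unitary operator of class C¹(A) that is weakly propagating with respect to A, meaning the bounded operator U*AU − A is non-negative and injective. Then U has no eigenvalues, i.e. its point spectrum is empty. -/
open scoped ComplexInnerProductSpace
open ContinuousLinearMap

noncomputable section

set_option linter.unusedSectionVars false
set_option maxHeartbeats 1000000

variable {H : Type*} [NormedAddCommGroup H] [InnerProductSpace ℂ H] [CompleteSpace H]

lemma pmapCongr {S T : H →ₗ.[ℂ] H} (h : S = T) (x : H) (hx : x ∈ S.domain)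
    (hx' : x ∈ T.domain) : S ⟨x, hx⟩ = T ⟨x, hx'⟩ := by subst h; rfl

lemma sa_symm {A : H →ₗ.[ℂ] H} (hA : IsSelfAdjoint A) (x y : A.domain) :
    ⟪A x, (y : H)⟫ = ⟪(x : H), A y⟫ := by
  have hE : A.adjoint = A := hA
  have hd : Dense (A.domain : Set H) := hA.dense_domain
  have hx : (x : H) ∈ A.adjoint.domain := by rw [hE]; exact x.2
  have h2 : A.adjoint ⟨(x : H), hx⟩ = A x := pmapCongr hE (x : H) hx x.2
  have := LinearPMap.adjoint_isFormalAdjoint hd ⟨(x : H), hx⟩ y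
  rw [h2] at this
  exact this

lemma sa_max {A : H →ₗ.[ℂ] H} (hA : IsSelfAdjoint A) {y z : H}
    (h : ∀ v : A.domain, ⟪z, (v : H)⟫ = ⟪y, A v⟫) :
    ∃ hy : y ∈ A.domain, A ⟨y, hy⟩ = z := by
  have hE : A.adjoint = A := hA
  have hd : Dense (A.domain : Set H) := hA.dense_domain
  have hy' : y ∈ A.adjoint.domain :=
    LinearPMap.mem_adjoint_domain_of_exists y ⟨z, h⟩
  have hy : y ∈ A.domain := by rwa [hE] at hy'
  refine ⟨hy, ?_⟩
  rw [← pmapCongr hE y hy' hy]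
  exact LinearPMap.adjoint_apply_eq hd ⟨y, hy'⟩ h

lemma sa_symm' {A : H →ₗ.[ℂ] H} (hA : ∀ x y : A.domain, ⟪A x, (y : H)⟫ = ⟪(x : H), A y⟫)
    (x : A.domain) : (⟪(x : H), A x⟫).im = 0 := by
  have h1 : (starRingEnd ℂ) ⟪(x : H), A x⟫ = ⟪(x : H), A x⟫ := by
    rw [inner_conj_symm]; exact hA x x
  exact Complex.conj_eq_iff_im.mp h1

lemma reg_norm_sq {A : H →ₗ.[ℂ] H} (hA : ∀ x y : A.domain, ⟪A x, (y : H)⟫ = ⟪(x : H), A y⟫)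
    (τ : ℝ) (x : A.domain) :
    ‖(x : H) + (Complex.I * τ) • A x‖ ^ 2 = ‖(x : H)‖ ^ 2 + τ ^ 2 * ‖A x‖ ^ 2 := by
  have him := sa_symm' hA x
  have h := @norm_add_sq ℂ _ _ _ _ ((x : H)) ((Complex.I * τ) • A x)
  rw [h, inner_smul_right, norm_smul]
  simp [Complex.mul_re, Complex.mul_im, him, mul_pow, sq_abs, RCLike.re_to_complex,
    Complex.norm_def, Complex.normSq_mul]

lemma reg_norm_le {A : H →ₗ.[ℂ] H} (hA : ∀ x y : A.domain, ⟪A x, (y : H)⟫ = ⟪(x : H), A y⟫)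
    (τ : ℝ) (x : A.domain) :
    ‖(x : H)‖ ≤ ‖(x : H) + (Complex.I * τ) • A x‖ := by
  have h : ‖(x : H)‖ ^ 2 ≤ ‖(x : H) + (Complex.I * τ) • A x‖ ^ 2 := by
    rw [reg_norm_sq hA]
    nlinarith [sq_nonneg (τ * ‖A x‖), norm_nonneg (A x)]
  have := Real.sqrt_le_sqrt h
  rwa [Real.sqrt_sq (norm_nonneg _), Real.sqrt_sq (norm_nonneg _)] at this

lemma reg_A_norm_le {A : H →ₗ.[ℂ] H} (hA : ∀ x y : A.domain, ⟪A x, (y : H)⟫ = ⟪(x : H), A y⟫)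
    (τ : ℝ) (x : A.domain) :
    |τ| * ‖A x‖ ≤ ‖(x : H) + (Complex.I * τ) • A x‖ := by
  have h : (|τ| * ‖A x‖) ^ 2 ≤ ‖(x : H) + (Complex.I * τ) • A x‖ ^ 2 := by
    rw [reg_norm_sq hA, mul_pow, sq_abs]
    nlinarith [sq_nonneg ‖(x : H)‖]
  have := Real.sqrt_le_sqrt h
  rwa [Real.sqrt_sq (by positivity), Real.sqrt_sq (norm_nonneg _)] at this

lemma reg_surj {A : H →ₗ.[ℂ] H} (hA : IsSelfAdjoint A) (τ : ℝ) (hτ : τ ≠ 0) (y : H) :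
    ∃ x : A.domain, (x : H) + (Complex.I * τ) • A x = y := by
  classical
  have hsymm : ∀ x y : A.domain, ⟪A x, (y : H)⟫ = ⟪(x : H), A y⟫ := sa_symm hA
  set μ : ℂ := Complex.I * τ with hμ
  set L : A.domain →ₗ[ℂ] H := A.domain.subtype + μ • A.toFun with hL
  have hLx : ∀ x : A.domain, L x = (x : H) + μ • A x := fun x => rfl
  set M := LinearMap.range L with hM
  have hMc : IsClosed (M : Set H) := by
    refine isClosed_of_closure_subset ?_
    intro y hy
    obtain ⟨u, hu, hulim⟩ := mem_closure_iff_seq_limit.mp hy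
    choose x hx using hu
    have hc : CauchySeq u := hulim.cauchySeq
    have key : ∀ n m : ℕ, ‖(x n : H) - (x m : H)‖ ≤ ‖u n - u m‖ ∧
        |τ| * ‖A (x n) - A (x m)‖ ≤ ‖u n - u m‖ := by
      intro n m
      have h1 : ((x n - x m : A.domain) : H) + μ • A (x n - x m) = u n - u m := by
        rw [← hLx, map_sub, hx, hx]
      have h2 := reg_norm_le hsymm τ (x n - x m)
      have h3 := reg_A_norm_le hsymm τ (x n - x m)
      rw [h1] at h2 h3
      constructor
      · simpa using h2
      · simpa [LinearPMap.map_sub] using h3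
    have hcx : CauchySeq (fun n => (x n : H)) := by
      rw [Metric.cauchySeq_iff] at hc ⊢
      intro ε hε
      obtain ⟨N, hN⟩ := hc ε hε
      refine ⟨N, fun m hm n hn => ?_⟩
      have := hN m hm n hn
      rw [dist_eq_norm] at this ⊢
      exact lt_of_le_of_lt (key m n).1 this
    have hcA : CauchySeq (fun n => A (x n)) := by
      rw [Metric.cauchySeq_iff] at hc ⊢
      intro ε hε
      obtain ⟨N, hN⟩ := hc (|τ| * ε) (by positivity)
      refine ⟨N, fun m hm n hn => ?_⟩
      have h1 := hN m hm n hn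
      rw [dist_eq_norm] at h1 ⊢
      have h2 := (key m n).2
      have h3 : |τ| * ‖A (x m) - A (x n)‖ < |τ| * ε := lt_of_le_of_lt h2 h1
      exact lt_of_mul_lt_mul_left h3 (abs_nonneg τ)
    obtain ⟨xl, hxl⟩ := cauchySeq_tendsto_of_complete hcx
    obtain ⟨zl, hzl⟩ := cauchySeq_tendsto_of_complete hcA
    have hmax : ∀ v : A.domain, ⟪zl, (v : H)⟫ = ⟪xl, A v⟫ := by
      intro v
      have t1 : Filter.Tendsto (fun n => ⟪A (x n), (v : H)⟫) Filter.atTop (nhds ⟪zl, (v : H)⟫) :=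
        hzl.inner tendsto_const_nhds
      have t2 : Filter.Tendsto (fun n => ⟪(x n : H), A v⟫) Filter.atTop (nhds ⟪xl, A v⟫) :=
        hxl.inner tendsto_const_nhds
      have heq : (fun n => ⟪A (x n), (v : H)⟫) = fun n => ⟪(x n : H), A v⟫ :=
        funext fun n => hsymm (x n) v
      rw [heq] at t1
      exact tendsto_nhds_unique t1 t2
    obtain ⟨hymem, hAy⟩ := sa_max hA hmax
    have hlim2 : Filter.Tendsto u Filter.atTop (nhds (xl + μ • zl)) := by
      have : Filter.Tendsto (fun n => (x n : H) + μ • A (x n)) Filter.atTop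
          (nhds (xl + μ • zl)) := hxl.add (hzl.const_smul μ)
      convert this using 2 with n
      rw [← hLx, hx]
    have hyeq : y = xl + μ • zl := tendsto_nhds_unique hulim hlim2
    refine ⟨⟨xl, hymem⟩, ?_⟩
    rw [hLx, hAy, hyeq]
  have hMt : M = ⊤ := by
    haveI : CompleteSpace M := hMc.completeSpace_coe
    rw [← Submodule.orthogonal_eq_bot_iff, Submodule.eq_bot_iff]
    intro v hv
    have h0 : ∀ x : A.domain, ⟪(x : H) + μ • A x, v⟫ = 0 := by
      intro x
      have := (Submodule.mem_orthogonal M v).mp hv (L x) (LinearMap.mem_range_self L x)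
      rwa [hLx] at this
    have hμ0 : μ ≠ 0 := mul_ne_zero Complex.I_ne_zero (by exact_mod_cast hτ)
    have hconj : (starRingEnd ℂ) μ = -μ := by
      rw [hμ, map_mul, Complex.conj_I, Complex.conj_ofReal]; ring
    have hclaim : ∀ x : A.domain, ⟪μ⁻¹ • v, (x : H)⟫ = ⟪v, A x⟫ := by
      intro x
      have h1 := h0 x
      rw [inner_add_left, inner_smul_left, hconj] at h1
      have h2 : ⟪(x : H), v⟫ = μ * ⟪A x, v⟫ := by linear_combination h1
      have h3 := congrArg (starRingEnd ℂ) h2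
      rw [map_mul, inner_conj_symm, inner_conj_symm, hconj] at h3
      rw [inner_smul_left, map_inv₀, hconj, h3]
      field_simp
    obtain ⟨hvmem, hAv⟩ := sa_max hA hclaim
    have him := sa_symm' (sa_symm hA) ⟨v, hvmem⟩
    rw [hAv, inner_smul_right, inner_self_eq_norm_sq_to_K] at him
    rw [hμ] at him
    simp [Complex.mul_im, Complex.inv_im, Complex.inv_re, Complex.normSq] at him
    rcases him with h | h
    · exact (hτ h).elim
    · simpa [← Complex.ofReal_pow, pow_eq_zero_iff] using h
  have hy : y ∈ M := hMt ▸ Submodule.mem_top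
  obtain ⟨x, hx⟩ := hy
  exact ⟨x, by rw [← hLx, hx]⟩

lemma reg_tendsto {A : H →ₗ.[ℂ] H} (hA : IsSelfAdjoint A) (φ : H) (τ : ℕ → ℝ)
    (hτ : ∀ n, τ n ≠ 0) (hlim : Filter.Tendsto τ Filter.atTop (nhds 0))
    (x : ℕ → A.domain) (hx : ∀ n, (x n : H) + (Complex.I * τ n) • A (x n) = φ) :
    Filter.Tendsto (fun n => (x n : H)) Filter.atTop (nhds φ) := by
  have hsymm : ∀ x y : A.domain, ⟪A x, (y : H)⟫ = ⟪(x : H), A y⟫ := sa_symm hA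
  rw [Metric.tendsto_atTop]
  intro ε hε
  obtain ⟨ψH, hψmem, hψ⟩ := (hA.dense_domain).exists_dist_lt φ (show (0:ℝ) < ε/3 by linarith)
  set ψ : A.domain := ⟨ψH, hψmem⟩ with hψdef
  have h2 : Filter.Tendsto (fun n => |τ n| * ‖A ψ‖) Filter.atTop (nhds 0) := by
    have := (hlim.abs).mul_const ‖A ψ‖
    simpa using this
  rw [Metric.tendsto_atTop] at h2
  obtain ⟨N, hN⟩ := h2 (ε/3) (by linarith)
  refine ⟨N, fun n hn => ?_⟩
  have hN' : |τ n| * ‖A ψ‖ < ε / 3 := by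
    have := hN n hn
    rwa [Real.dist_eq, sub_zero, abs_of_nonneg (by positivity)] at this
  -- estimate
  have hest : ‖(x n : H) - ψH‖ ≤ dist φ ψH + |τ n| * ‖A ψ‖ := by
    have h1 : ((x n - ψ : A.domain) : H) + (Complex.I * τ n) • A (x n - ψ)
        = φ - (ψH + (Complex.I * τ n) • A ψ) := by
      rw [LinearPMap.map_sub, Submodule.coe_sub, smul_sub, ← hx n]
      simp [hψdef]
      abel
    have h2 := reg_norm_le hsymm (τ n) (x n - ψ)
    rw [h1] at h2
    have h3 : ‖φ - (ψH + (Complex.I * τ n) • A ψ)‖ ≤ ‖φ - ψH‖ + ‖(Complex.I * τ n) • A ψ‖ := by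
      have : φ - (ψH + (Complex.I * τ n) • A ψ) = (φ - ψH) - (Complex.I * τ n) • A ψ := by abel
      rw [this]
      exact norm_sub_le _ _
    have h4 : ‖(Complex.I * (τ n : ℂ)) • A ψ‖ = |τ n| * ‖A ψ‖ := by
      rw [norm_smul, norm_mul, Complex.norm_I, one_mul, Complex.norm_real]
      simp
    calc ‖(x n : H) - ψH‖ = ‖((x n - ψ : A.domain) : H)‖ := by simp [hψdef]
    _ ≤ ‖φ - (ψH + (Complex.I * τ n) • A ψ)‖ := h2
    _ ≤ ‖φ - ψH‖ + ‖(Complex.I * (τ n : ℂ)) • A ψ‖ := h3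
    _ = dist φ ψH + |τ n| * ‖A ψ‖ := by rw [h4, dist_eq_norm]
  have : dist (x n : H) φ ≤ ‖(x n : H) - ψH‖ + dist φ ψH := by
    calc dist (x n : H) φ ≤ dist (x n : H) ψH + dist ψH φ := dist_triangle _ _ _
    _ = ‖(x n : H) - ψH‖ + dist φ ψH := by rw [dist_eq_norm, dist_comm]
  calc dist (x n : H) φ ≤ ‖(x n : H) - ψH‖ + dist φ ψH := this
  _ ≤ (dist φ ψH + |τ n| * ‖A ψ‖) + dist φ ψH := by linarith
  _ < ε := by linarith

lemma isPositive_inner_zero {B : H →L[ℂ] H} (hB : B.IsPositive) {x : H}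
    (hx : ⟪x, B x⟫ = 0) : B x = 0 := by
  set y := B x with hy
  have hsymm := hB.isSymmetric
  have hBxx : ⟪B x, x⟫ = 0 := by rw [← inner_conj_symm, hx, map_zero]
  have hBxy : ⟪B x, y⟫ = (‖B x‖ ^ 2 : ℝ) := by
    rw [hy, inner_self_eq_norm_sq_to_K]; norm_cast
  have hByx : ⟪B y, x⟫ = (‖B x‖ ^ 2 : ℝ) := by
    have h1 : ⟪B y, x⟫ = ⟪y, B x⟫ := by
      conv_lhs => rw [← hB.isSelfAdjoint.adjoint_eq]
      exact ContinuousLinearMap.adjoint_inner_left B x y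
    rw [h1, hy, inner_self_eq_norm_sq_to_K]; norm_cast
  have hK : 0 ≤ Complex.re ⟪B y, y⟫ := hB.2 y
  have quad : ∀ t : ℝ, 0 ≤ 2 * t * ‖B x‖ ^ 2 + t ^ 2 * Complex.re ⟪B y, y⟫ := by
    intro t
    have hq := hB.2 (x + (t : ℂ) • y)
    have hexp : ⟪B (x + (t : ℂ) • y), x + (t : ℂ) • y⟫
        = ⟪B x, x⟫ + (t : ℂ) * ⟪B x, y⟫ + (t : ℂ) * ⟪B y, x⟫ + (t : ℂ) ^ 2 * ⟪B y, y⟫ := by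
      rw [map_add, map_smul, inner_add_left, inner_add_right, inner_add_right,
        inner_smul_left, inner_smul_right, inner_smul_left, inner_smul_right,
        Complex.conj_ofReal]
      ring
    have heq2 : ContinuousLinearMap.reApplyInnerSelf B (x + (t : ℂ) • y)
        = 2 * t * ‖B x‖ ^ 2 + t ^ 2 * Complex.re ⟪B y, y⟫ := by
      rw [ContinuousLinearMap.reApplyInnerSelf, hexp, hBxx, hBxy, hByx]
      push_cast
      simp [Complex.add_re, Complex.mul_re, Complex.ofReal_re, Complex.ofReal_im,
        ← Complex.ofReal_pow]
      ring
    rw [heq2] at hq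
    exact hq
  set S := ‖B x‖ ^ 2 with hS
  have hS0 : 0 ≤ S := by positivity
  set K := Complex.re ⟪B y, y⟫ with hKdef
  have hK1 : (0:ℝ) < K + 1 := by linarith
  have hq := quad (-(S / (K + 1)))
  have h2 : 0 ≤ (2 * -(S / (K + 1)) * S + (-(S / (K + 1))) ^ 2 * K) * (K + 1) ^ 2 :=
    mul_nonneg hq (by positivity)
  have h3 : (2 * -(S / (K + 1)) * S + (-(S / (K + 1))) ^ 2 * K) * (K + 1) ^ 2
      = -(S ^ 2 * (K + 2)) := by field_simp; ring
  rw [h3] at h2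
  have hsq : S ^ 2 = 0 := le_antisymm (by nlinarith) (sq_nonneg S)
  have hBx0 : S = 0 := pow_eq_zero_iff two_ne_zero |>.mp hsq
  have : ‖B x‖ = 0 := by
    have := pow_eq_zero_iff (n := 2) two_ne_zero |>.mp hBx0
    exact this
  exact norm_eq_zero.mp this

/-- A bounded operator `B` is of class `C¹(A)` with commutator `ad_A(B) = B'` if the
sesquilinear form `(φ, ψ) ↦ ⟪Aφ, Bψ⟫ - ⟪φ, B(Aψ)⟫` on `D(A) × D(A)` is represented by the
bounded operator `B'`. -/
def HasCommutator (A : H →ₗ.[ℂ] H) (B B' : H →L[ℂ] H) : Prop :=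
  ∀ φ ψ : A.domain, ⟪A φ, B ψ⟫ - ⟪(φ : H), B (A ψ)⟫ = ⟪(φ : H), B' ψ⟫

/-- A unitary operator on a Hilbert space. -/
def IsUnitaryCLM (U : H →L[ℂ] H) : Prop :=
  adjoint U ∘L U = 1 ∧ U ∘L adjoint U = 1

/-- If a unitary `U ∈ C¹(A)` is weakly propagating with respect to `A`,
i.e. `U*AU - A = U* ∘ ad_A(U)` is non-negative and injective, then `U` has no eigenvalues. -/
theorem weakly_propagating_no_point_spectrum
    (A : H →ₗ.[ℂ] H) (hA : IsSelfAdjoint A)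
    (U U' : H →L[ℂ] H) (hU : IsUnitaryCLM U)
    (hC : HasCommutator A U U')
    (hpos : (adjoint U ∘L U').IsPositive)
    (hinj : Function.Injective (adjoint U ∘L U')) :
    ∀ (c : ℂ) (φ : H), φ ≠ 0 → U φ ≠ c • φ := by
  intro c φ hφ0 heq
  have hsymm : ∀ x y : A.domain, ⟪A x, (y : H)⟫ = ⟪(x : H), A y⟫ := sa_symm hA
  -- unitarity facts
  have hUU : ∀ w : H, adjoint U (U w) = w := fun w => by
    have := congrArg (fun T : H →L[ℂ] H => T w) hU.1
    simpa using this
  have hnorm : ‖U φ‖ = ‖φ‖ := by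
    have h1 : ⟪U φ, U φ⟫ = ⟪φ, φ⟫ := by
      calc ⟪U φ, U φ⟫ = ⟪adjoint U (U φ), φ⟫ := (adjoint_inner_left U φ (U φ)).symm
      _ = ⟪φ, φ⟫ := by rw [hUU φ]
    rw [inner_self_eq_norm_sq_to_K, inner_self_eq_norm_sq_to_K] at h1
    norm_cast at h1
    have := congrArg Real.sqrt h1
    rwa [Real.sqrt_sq (norm_nonneg _), Real.sqrt_sq (norm_nonneg _)] at this
  have hcnorm : ‖c‖ = 1 := by
    have h1 : ‖c‖ * ‖φ‖ = 1 * ‖φ‖ := by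
      rw [one_mul, ← norm_smul, ← heq, hnorm]
    exact mul_right_cancel₀ (norm_ne_zero_iff.mpr hφ0) h1
  have hc0 : c ≠ 0 := by
    intro h; rw [h] at hcnorm; simp at hcnorm
  have hUs : adjoint U φ = c⁻¹ • φ := by
    have h1 : c • adjoint U φ = φ := by rw [← map_smul, ← heq, hUU]
    have h2 := congrArg (fun v : H => c⁻¹ • v) h1
    simpa [smul_smul, inv_mul_cancel₀ hc0] using h2
  have hconjcinv : (starRingEnd ℂ) c⁻¹ = c := by
    have hm : c * (starRingEnd ℂ) c = 1 := by
      rw [Complex.mul_conj, Complex.normSq_eq_norm_sq, hcnorm]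
      norm_num
    have hcc : (starRingEnd ℂ) c = c⁻¹ := eq_inv_of_mul_eq_one_right hm
    rw [map_inv₀, hcc, inv_inv]
  -- the regularizing sequences
  set τ : ℕ → ℝ := fun n => 1 / ((n : ℝ) + 1) with hτdef
  have hτn : ∀ n, τ n ≠ 0 := fun n => one_div_ne_zero (by positivity)
  have hτlim : Filter.Tendsto τ Filter.atTop (nhds 0) :=
    tendsto_one_div_add_atTop_nhds_zero_nat
  have hτn' : ∀ n, -(τ n) ≠ 0 := fun n => neg_ne_zero.mpr (hτn n)
  have hτlim' : Filter.Tendsto (fun n => -(τ n)) Filter.atTop (nhds 0) := by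
    simpa using hτlim.neg
  choose b hb using fun n => reg_surj hA (τ n) (hτn n) φ
  choose a ha using fun n => reg_surj hA (-(τ n)) (hτn' n) φ
  -- the key vanishing identity
  have key : ∀ n, ⟪(a n : H), U' (b n : H)⟫ = 0 := by
    intro n
    set μ : ℂ := Complex.I * (τ n : ℂ) with hμdef
    have hμ0 : μ ≠ 0 := mul_ne_zero Complex.I_ne_zero (by exact_mod_cast hτn n)
    have hconjμ : (starRingEnd ℂ) μ = -μ := by
      rw [hμdef, map_mul, Complex.conj_I, Complex.conj_ofReal]; ring
    have hφa : (a n : H) - μ • A (a n) = φ := by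
      have := ha n
      rw [Complex.ofReal_neg, mul_neg, neg_smul, ← sub_eq_add_neg] at this
      exact this
    have hφb : (b n : H) + μ • A (b n) = φ := hb n
    have h1 : μ • A (a n) = (a n : H) - φ := by rw [← hφa]; abel
    have hAa : A (a n) = μ⁻¹ • ((a n : H) - φ) := by
      rw [← h1, smul_smul, inv_mul_cancel₀ hμ0, one_smul]
    have h2 : μ • A (b n) = φ - (b n : H) := by rw [← hφb]; abel
    have hAb : A (b n) = μ⁻¹ • (φ - (b n : H)) := by
      rw [← h2, smul_smul, inv_mul_cancel₀ hμ0, one_smul]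
    have e1 : ⟪A (a n), U (b n : H)⟫
        = -μ⁻¹ * (⟪(a n : H), U (b n : H)⟫ - ⟪φ, U (b n : H)⟫) := by
      rw [hAa, inner_smul_left, inner_sub_left, map_inv₀, hconjμ, inv_neg]
    have e2 : ⟪(a n : H), U (A (b n))⟫
        = μ⁻¹ * (⟪(a n : H), U φ⟫ - ⟪(a n : H), U (b n : H)⟫) := by
      rw [hAb, map_smul, inner_smul_right, map_sub, inner_sub_right]
    have e3 : ⟪φ, U (b n : H)⟫ = c * ⟪φ, (b n : H)⟫ := by
      rw [← adjoint_inner_left U (b n : H) φ, hUs, inner_smul_left, hconjcinv]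
    have e4 : ⟪(a n : H), U φ⟫ = c * ⟪(a n : H), φ⟫ := by
      rw [heq, inner_smul_right]
    have e5 : ⟪φ, (b n : H)⟫ = ⟪(a n : H), φ⟫ := by
      calc ⟪φ, (b n : H)⟫ = ⟪(a n : H) - μ • A (a n), (b n : H)⟫ := by rw [hφa]
      _ = ⟪(a n : H), (b n : H)⟫ + μ * ⟪A (a n), (b n : H)⟫ := by
          rw [inner_sub_left, inner_smul_left, hconjμ]; ring
      _ = ⟪(a n : H), (b n : H)⟫ + μ * ⟪(a n : H), A (b n)⟫ := by rw [hsymm (a n) (b n)]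
      _ = ⟪(a n : H), (b n : H) + μ • A (b n)⟫ := by rw [inner_add_right, inner_smul_right]
      _ = ⟪(a n : H), φ⟫ := by rw [hφb]
    calc ⟪(a n : H), U' (b n : H)⟫
        = ⟪A (a n), U (b n : H)⟫ - ⟪(a n : H), U (A (b n))⟫ := (hC (a n) (b n)).symm
    _ = -μ⁻¹ * (⟪(a n : H), U (b n : H)⟫ - c * ⟪φ, (b n : H)⟫)
        - μ⁻¹ * (c * ⟪(a n : H), φ⟫ - ⟪(a n : H), U (b n : H)⟫) := by
        rw [e1, e2, e3, e4]
    _ = -μ⁻¹ * (⟪(a n : H), U (b n : H)⟫ - c * ⟪(a n : H), φ⟫)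
        - μ⁻¹ * (c * ⟪(a n : H), φ⟫ - ⟪(a n : H), U (b n : H)⟫) := by rw [e5]
    _ = 0 := by ring
  -- pass to the limit
  have hta : Filter.Tendsto (fun n => (a n : H)) Filter.atTop (nhds φ) :=
    reg_tendsto hA φ (fun n => -(τ n)) hτn' hτlim' a ha
  have htb : Filter.Tendsto (fun n => (b n : H)) Filter.atTop (nhds φ) :=
    reg_tendsto hA φ τ hτn hτlim b hb
  have hlim : Filter.Tendsto (fun n => ⟪(a n : H), U' (b n : H)⟫) Filter.atTop
      (nhds ⟪φ, U' φ⟫) :=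
    Filter.Tendsto.inner hta ((U'.continuous.tendsto φ).comp htb)
  have h0 : ⟪φ, U' φ⟫ = 0 := by
    have h' := hlim
    simp only [key] at h'
    exact tendsto_nhds_unique h' tendsto_const_nhds
  have hBinner : ⟪φ, (adjoint U ∘L U') φ⟫ = 0 := by
    rw [ContinuousLinearMap.comp_apply, adjoint_inner_right U φ (U' φ), heq,
      inner_smul_left, h0, mul_zero]
  have hB0 : (adjoint U ∘L U') φ = 0 := isPositive_inner_zero hpos hBinner
  exact hφ0 (hinj (hB0.trans (map_zero (adjoint U ∘L U')).symm))
end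
end

section
/- With Ω the two-sided Bernoulli shift space, the restriction U^⊥ of the Koopman operator to L²_⊥(Ω,P) = {f ∈ L² : ∫ f dP = 0} satisfies (U^⊥)* A^⊥ U^⊥ − A^⊥ = I, where A^⊥ is the restriction of the averaged-position operator A to L²_⊥. Consequently U^⊥ is strictly propagating with respect to A^⊥ on the whole circle and belongs to C^∞(A^⊥). -/
open scoped ComplexInnerProductSpace
open ContinuousLinearMap

noncomputable section

variable {H : Type*} [NormedAddCommGroup H] [InnerProductSpace ℂ H] [CompleteSpace H]

/-- `U` is of class `C^∞(A)`: there is a sequence of bounded operators starting at `U` in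
which each term has the next one as its commutator with `A`. -/
def HasCommutatorSeq (A : H →ₗ.[ℂ] H) (U : H →L[ℂ] H) : Prop :=
  ∃ seq : ℕ → (H →L[ℂ] H), seq 0 = U ∧ ∀ n, HasCommutator A (seq n) (seq (n + 1))

/-- The average `|σ|⁻¹ ∑_{i ∈ σ} i` of a finite set of integers. -/
def wAvg (σ : Finset ℤ) : ℝ := (σ.sum fun i => (i : ℝ)) / σ.card

/-- Translation `σ ↦ σ + 1` on nonempty finite subsets of `ℤ`. -/
def shiftNE (σ : {s : Finset ℤ // s ≠ ∅}) : {s : Finset ℤ // s ≠ ∅} :=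
  ⟨σ.1.image (· + 1), fun h => σ.2 (Finset.image_eq_empty.mp h)⟩

/-- Inverse translation `σ ↦ σ - 1` on nonempty finite subsets of `ℤ`. -/
def unshiftNE (σ : {s : Finset ℤ // s ≠ ∅}) : {s : Finset ℤ // s ≠ ∅} :=
  ⟨σ.1.image (· - 1), fun h => σ.2 (Finset.image_eq_empty.mp h)⟩

/-- `shiftNE` as an equivalence. -/
def shiftEquiv : {s : Finset ℤ // s ≠ ∅} ≃ {s : Finset ℤ // s ≠ ∅} where
  toFun := shiftNE
  invFun := unshiftNE
  left_inv σ := by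
    apply Subtype.ext
    simp only [shiftNE, unshiftNE, Finset.image_image]
    rw [show ((· - 1) ∘ (· + 1) : ℤ → ℤ) = _root_.id by funext x; simp]
    exact Finset.image_id
  right_inv σ := by
    apply Subtype.ext
    simp only [shiftNE, unshiftNE, Finset.image_image]
    rw [show ((· + 1) ∘ (· - 1) : ℤ → ℤ) = _root_.id by funext x; simp]
    exact Finset.image_id

lemma wAvg_shiftNE (σ : {s : Finset ℤ // s ≠ ∅}) :
    wAvg (shiftNE σ).1 = wAvg σ.1 + 1 := by
  obtain ⟨s, hs⟩ := σ
  have hne : s.Nonempty := Finset.nonempty_iff_ne_empty.mpr hs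
  have hinj : Function.Injective (· + 1 : ℤ → ℤ) := fun a b h => by simpa using h
  simp only [shiftNE, wAvg]
  rw [Finset.sum_image (fun a _ b _ h => hinj h),
    Finset.card_image_of_injective _ hinj]
  have hc : (s.card : ℝ) ≠ 0 := Nat.cast_ne_zero.mpr (Finset.card_ne_zero.mpr hne)
  push_cast
  rw [Finset.sum_add_distrib, Finset.sum_const, nsmul_eq_mul, mul_one]
  field_simp

/-- On `L²_⊥(Ω,P)` (spanned by the Fourier–Walsh vectors `f_σ`, `σ ≠ ∅`),
the restricted Koopman operator `U^⊥` satisfies `(U^⊥)* A^⊥ U^⊥ - A^⊥ = I`; consequently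
`U^⊥` is strictly propagating with respect to `A^⊥` on the whole circle and belongs to
`C^∞(A^⊥)`. -/
theorem bernoulli_koopman_restricted_strictly_propagating
    (f : HilbertBasis {s : Finset ℤ // s ≠ ∅} ℂ H)
    (U : H →L[ℂ] H) (hU : IsUnitaryCLM U)
    (hUf : ∀ σ, U (f σ) = f (shiftNE σ))
    (A : H →ₗ.[ℂ] H)
    (hAdom : ∀ x : H,
      x ∈ A.domain ↔ Summable (fun σ : {s : Finset ℤ // s ≠ ∅} => (wAvg σ.1 * ‖⟪f σ, x⟫‖) ^ 2))
    (hAval : ∀ (ψ : A.domain) (σ : {s : Finset ℤ // s ≠ ∅}),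
      ⟪f σ, A ψ⟫ = (wAvg σ.1 : ℂ) * ⟪f σ, (ψ : H)⟫) :
    ∃ U' : H →L[ℂ] H, HasCommutator A U U' ∧
      adjoint U ∘L U' = 1 ∧
      (∃ c > (0 : ℝ), ((adjoint U ∘L U') - ((c : ℂ) • 1)).IsPositive) ∧
      HasCommutatorSeq A U := by
  have hUU : ∀ x : H, adjoint U (U x) = x := fun x => by
    have := congrFun (congrArg DFunLike.coe hU.1) x
    simpa using this
  -- Inner products of `U x` with `U y` are preserved.
  have hUinner : ∀ x y : H, ⟪U x, U y⟫ = ⟪x, y⟫ := fun x y => by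
    rw [← ContinuousLinearMap.adjoint_inner_left, hUU]
  -- inner product of a shifted basis vector with `U y`
  have hfU : ∀ (τ : {s : Finset ℤ // s ≠ ∅}) (y : H),
      ⟪f (shiftNE τ), U y⟫ = ⟪f τ, y⟫ := fun τ y => by
    rw [← hUf, hUinner]
  -- inner product of `A φ` against a basis vector
  have hAf : ∀ (φ : A.domain) (σ : {s : Finset ℤ // s ≠ ∅}),
      ⟪A φ, f σ⟫ = (wAvg σ.1 : ℂ) * ⟪(φ : H), f σ⟫ := fun φ σ => by
    rw [← inner_conj_symm, hAval, map_mul, Complex.conj_ofReal, inner_conj_symm]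
  -- The key commutator identity: [A, U] = U on D(A).
  have key : HasCommutator A U U := by
    intro φ ψ
    have h1 : ⟪A φ, U ψ⟫
        = ∑' τ, ⟪A φ, f (shiftEquiv τ)⟫ * ⟪f (shiftEquiv τ), U ψ⟫ := by
      rw [← f.tsum_inner_mul_inner (A φ) (U ψ), ← shiftEquiv.tsum_eq]
    have h2 : ⟪(φ : H), U (A ψ)⟫
        = ∑' τ, ⟪(φ : H), f (shiftEquiv τ)⟫ * ⟪f (shiftEquiv τ), U (A ψ)⟫ := by
      rw [← f.tsum_inner_mul_inner ((φ : H)) (U (A ψ)), ← shiftEquiv.tsum_eq]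
    have h3 : ⟪(φ : H), U ψ⟫
        = ∑' τ, ⟪(φ : H), f (shiftEquiv τ)⟫ * ⟪f (shiftEquiv τ), U ψ⟫ := by
      rw [← f.tsum_inner_mul_inner ((φ : H)) (U ψ), ← shiftEquiv.tsum_eq]
    have hs1 : Summable fun τ => ⟪A φ, f (shiftEquiv τ)⟫ * ⟪f (shiftEquiv τ), U ψ⟫ :=
      (f.summable_inner_mul_inner (A φ) (U ψ)).comp_injective shiftEquiv.injective
    have hs2 : Summable fun τ => ⟪(φ : H), f (shiftEquiv τ)⟫ * ⟪f (shiftEquiv τ), U (A ψ)⟫ :=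
      (f.summable_inner_mul_inner ((φ : H)) (U (A ψ))).comp_injective shiftEquiv.injective
    rw [h1, h2, h3, ← Summable.tsum_sub hs1 hs2]
    apply tsum_congr
    intro τ
    have e1 : (shiftEquiv τ : {s : Finset ℤ // s ≠ ∅}) = shiftNE τ := rfl
    rw [e1, hAf, hfU, hfU, hAval, wAvg_shiftNE]
    push_cast
    ring
  refine ⟨U, key, hU.1, ⟨1, one_pos, ?_⟩, fun _ => U, rfl, fun _ => key⟩
  have h0 : (adjoint U ∘L U) - (((1 : ℝ) : ℂ) • 1) = 0 := by
    rw [hU.1]; norm_num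
  rw [h0]
  exact ContinuousLinearMap.isPositive_zero
end
end
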